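/- Let (S, μ) be a σ-finite measure space, W a symmetric integrable function on S², and f : S → [0,1] measurable with ∫ f dμ ≤ M, such that the cut norm ‖W − (f⊗f)·W‖_□ < ε. Define U := {x : f(x) > 1/2}. Then μ(U) ≤ 2M and ‖W − W·1_{U×U}‖_□ < 4ε. -/

import Mathlib

open MeasureTheory Filter Topology

noncomputable def cutNorm {S : Type*} [MeasurableSpace S] (μ : Measure S)
    (F : S × S → ℝ) : ℝ :=
  ⨆ TU : {TU : Set S × Set S // MeasurableSet TU.1 ∧ MeasurableSet TU.2},
    |∫ p in TU.1.1 ×ˢ TU.1.2, F p ∂(μ.prod μ)|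

set_option linter.unusedSectionVars false
set_option linter.unusedVariables false

section Helpers


variable {S : Type*} [MeasurableSpace S] {μ : Measure S} [SigmaFinite μ]

instance cutNorm_index_nonempty : Nonempty {TU : Set S × Set S // MeasurableSet TU.1 ∧ MeasurableSet TU.2} :=
  ⟨⟨(∅, ∅), MeasurableSet.empty, MeasurableSet.empty⟩⟩

lemma cutNorm_bdd {F : S × S → ℝ} (hF : Integrable F (μ.prod μ)) :
    BddAbove (Set.range fun TU : {TU : Set S × Set S // MeasurableSet TU.1 ∧ MeasurableSet TU.2} =>
      |∫ p in TU.1.1 ×ˢ TU.1.2, F p ∂(μ.prod μ)|) := by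
  refine ⟨∫ p, ‖F p‖ ∂(μ.prod μ), ?_⟩
  rintro x ⟨⟨⟨T, U⟩, hT, hU⟩, rfl⟩
  calc |∫ p in T ×ˢ U, F p ∂(μ.prod μ)| ≤ ∫ p in T ×ˢ U, ‖F p‖ ∂(μ.prod μ) := by
        simpa [Real.norm_eq_abs] using
          norm_integral_le_integral_norm (μ := (μ.prod μ).restrict (T ×ˢ U)) F
    _ ≤ ∫ p, ‖F p‖ ∂(μ.prod μ) :=
        setIntegral_le_integral hF.norm (Eventually.of_forall fun p => norm_nonneg _)

lemma abs_setIntegral_le_cutNorm {F : S × S → ℝ} (hF : Integrable F (μ.prod μ))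
    {T U : Set S} (hT : MeasurableSet T) (hU : MeasurableSet U) :
    |∫ p in T ×ˢ U, F p ∂(μ.prod μ)| ≤ cutNorm μ F :=
  le_ciSup (cutNorm_bdd hF) ⟨(T, U), hT, hU⟩

lemma cutNorm_nonneg {F : S × S → ℝ} (hF : Integrable F (μ.prod μ)) :
    0 ≤ cutNorm μ F :=
  le_trans (abs_nonneg _)
    (abs_setIntegral_le_cutNorm hF MeasurableSet.empty MeasurableSet.empty)

lemma cutNorm_le {F : S × S → ℝ} {C : ℝ}
    (h : ∀ T U : Set S, MeasurableSet T → MeasurableSet U →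
      |∫ p in T ×ˢ U, F p ∂(μ.prod μ)| ≤ C) :
    cutNorm μ F ≤ C := by
  refine ciSup_le ?_
  rintro ⟨⟨T, U⟩, hT, hU⟩
  exact h T U hT hU

lemma layer_integral {a : ℝ} (h0 : 0 ≤ a) (h1 : a ≤ 1) :
    ∫ s, (if s < a then (1:ℝ) else 0) ∂(volume.restrict (Set.Ioo (0:ℝ) 1)) = a := by
  have heq : (fun s : ℝ => if s < a then (1:ℝ) else 0)
      = Set.indicator (Set.Iio a) (fun _ => (1:ℝ)) := by
    ext s; by_cases hs : s < a <;> simp [Set.indicator_apply, hs]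
  rw [heq, integral_indicator measurableSet_Iio,
    Measure.restrict_restrict measurableSet_Iio, setIntegral_const]
  have hset : Set.Iio a ∩ Set.Ioo 0 1 = Set.Ioo 0 a := by
    ext x
    constructor
    · rintro ⟨hxa, hx0, _⟩; exact ⟨hx0, hxa⟩
    · rintro ⟨hx0, hxa⟩; exact ⟨hxa, hx0, lt_of_lt_of_le hxa h1⟩
  rw [hset, measureReal_def, Real.volume_Ioo]
  simp [ENNReal.toReal_ofReal h0]


lemma abs_integral_mul_mul_le_cutNorm {F : S × S → ℝ} (hF : Integrable F (μ.prod μ))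
    {g h : S → ℝ} (hg : Measurable g) (hh : Measurable h)
    (hg01 : ∀ x, g x ∈ Set.Icc (0:ℝ) 1) (hh01 : ∀ x, h x ∈ Set.Icc (0:ℝ) 1) :
    |∫ p, g p.1 * h p.2 * F p ∂(μ.prod μ)| ≤ cutNorm μ F := by
  set ν : Measure ℝ := volume.restrict (Set.Ioo 0 1) with hν
  haveI : IsProbabilityMeasure ν := ⟨by simp [hν, Real.volume_Ioo]⟩
  set Φ : (S × S) → (ℝ × ℝ) → ℝ := fun p st =>
    (if st.1 < g p.1 then (1:ℝ) else 0) * (if st.2 < h p.2 then (1:ℝ) else 0) * F p with hΦ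
  have hFfst : Integrable (fun q : (S × S) × (ℝ × ℝ) => F q.1) ((μ.prod μ).prod (ν.prod ν)) := by
    simpa using hF.mul_prod (integrable_const (1:ℝ))
  have hm1 : Measurable fun q : (S × S) × (ℝ × ℝ) => (if q.2.1 < g q.1.1 then (1:ℝ) else 0) :=
    Measurable.ite (measurableSet_lt (measurable_fst.comp measurable_snd)
      (hg.comp (measurable_fst.comp measurable_fst))) measurable_const measurable_const
  have hm2 : Measurable fun q : (S × S) × (ℝ × ℝ) => (if q.2.2 < h q.1.2 then (1:ℝ) else 0) :=
    Measurable.ite (measurableSet_lt (measurable_snd.comp measurable_snd)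
      (hh.comp (measurable_snd.comp measurable_fst))) measurable_const measurable_const
  have hΦint : Integrable (Function.uncurry Φ) ((μ.prod μ).prod (ν.prod ν)) := by
    refine Integrable.mono' hFfst.norm (((hm1.mul hm2).aestronglyMeasurable).mul hFfst.1) ?_
    refine Eventually.of_forall fun q => ?_
    simp only [Function.uncurry, hΦ, norm_mul, Real.norm_eq_abs]
    have h1 : |if q.2.1 < g q.1.1 then (1:ℝ) else 0| ≤ 1 := by split <;> simp
    have h2 : |if q.2.2 < h q.1.2 then (1:ℝ) else 0| ≤ 1 := by split <;> simp
    calc |if q.2.1 < g q.1.1 then (1:ℝ) else 0| * |if q.2.2 < h q.1.2 then (1:ℝ) else 0| * |F q.1|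
        ≤ 1 * 1 * |F q.1| := by
          apply mul_le_mul (mul_le_mul h1 h2 (abs_nonneg _) zero_le_one) le_rfl (abs_nonneg _)
          norm_num
      _ = |F q.1| := by ring
  have hinner : ∀ p : S × S, ∫ st, Φ p st ∂(ν.prod ν) = g p.1 * h p.2 * F p := by
    intro p
    have : ∫ st : ℝ × ℝ, (if st.1 < g p.1 then (1:ℝ) else 0) *
        ((if st.2 < h p.2 then (1:ℝ) else 0) * F p) ∂(ν.prod ν)
        = (∫ s, (if s < g p.1 then (1:ℝ) else 0) ∂ν) *
          (∫ t, (if t < h p.2 then (1:ℝ) else 0) * F p ∂ν) :=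
      integral_prod_mul (fun s => if s < g p.1 then (1:ℝ) else 0)
        (fun t => (if t < h p.2 then (1:ℝ) else 0) * F p)
    calc ∫ st, Φ p st ∂(ν.prod ν)
        = ∫ st : ℝ × ℝ, (if st.1 < g p.1 then (1:ℝ) else 0) *
            ((if st.2 < h p.2 then (1:ℝ) else 0) * F p) ∂(ν.prod ν) := by
          simp only [hΦ, mul_assoc]
      _ = (∫ s, (if s < g p.1 then (1:ℝ) else 0) ∂ν) *
            ((∫ t, (if t < h p.2 then (1:ℝ) else 0) ∂ν) * F p) := by
          rw [this, integral_mul_const]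
      _ = g p.1 * (h p.2 * F p) := by
          rw [layer_integral (hg01 p.1).1 (hg01 p.1).2, layer_integral (hh01 p.2).1 (hh01 p.2).2]
      _ = g p.1 * h p.2 * F p := by ring
  have hswap : ∫ p, g p.1 * h p.2 * F p ∂(μ.prod μ)
      = ∫ st, ∫ p, Φ p st ∂(μ.prod μ) ∂(ν.prod ν) := by
    rw [← integral_integral_swap hΦint]
    exact integral_congr_ae (Eventually.of_forall fun p => (hinner p).symm)
  rw [hswap]
  have hbound : ∀ st : ℝ × ℝ, ‖∫ p, Φ p st ∂(μ.prod μ)‖ ≤ cutNorm μ F := by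
    intro st
    have hset : ∀ p : S × S, Φ p st =
        Set.indicator ({x | st.1 < g x} ×ˢ {x | st.2 < h x}) F p := by
      intro p
      by_cases h1 : st.1 < g p.1 <;> by_cases h2 : st.2 < h p.2 <;>
        simp [hΦ, Set.indicator_apply, Set.mem_prod, h1, h2]
    calc ‖∫ p, Φ p st ∂(μ.prod μ)‖
        = |∫ p in {x | st.1 < g x} ×ˢ {x | st.2 < h x}, F p ∂(μ.prod μ)| := by
          rw [Real.norm_eq_abs]
          congr 1
          rw [← integral_indicator ((measurableSet_lt measurable_const hg).prod
            (measurableSet_lt measurable_const hh))]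
          exact integral_congr_ae (Eventually.of_forall hset)
      _ ≤ cutNorm μ F := abs_setIntegral_le_cutNorm hF
          (measurableSet_lt measurable_const hg) (measurableSet_lt measurable_const hh)
  calc |∫ st, ∫ p, Φ p st ∂(μ.prod μ) ∂(ν.prod ν)|
      ≤ cutNorm μ F * ((ν.prod ν) Set.univ).toReal := by
        rw [← Real.norm_eq_abs]
        exact norm_integral_le_of_norm_le_const (Eventually.of_forall hbound)
    _ = cutNorm μ F := by simp

lemma key_lemma {W : S × S → ℝ} (hW : Integrable W (μ.prod μ))
    {f : S → ℝ} (hf : Measurable f) (hf01 : ∀ x, f x ∈ Set.Icc (0:ℝ) 1)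
    {P Q : Set S} (hP : MeasurableSet P) (hQ : MeasurableSet Q)
    (hsmall : ∀ x ∈ P, f x ≤ 1/2) :
    |∫ p in P ×ˢ Q, W p ∂(μ.prod μ)| ≤
      2 * cutNorm μ (fun q => W q - f q.1 * f q.2 * W q) := by
  set G : S × S → ℝ := fun q => W q - f q.1 * f q.2 * W q with hGdef
  have hffW : Integrable (fun q : S × S => f q.1 * f q.2 * W q) (μ.prod μ) := by
    refine Integrable.mono' hW.norm
      ((((hf.comp measurable_fst).mul (hf.comp measurable_snd)).aestronglyMeasurable).mul hW.1)
      (Eventually.of_forall fun q => ?_)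
    rw [Real.norm_eq_abs, abs_mul, abs_mul]
    have h1 := hf01 q.1; have h2 := hf01 q.2
    have : |f q.1| * |f q.2| ≤ 1 := by
      rw [abs_of_nonneg h1.1, abs_of_nonneg h2.1]
      exact mul_le_one₀ h1.2 h2.1 h2.2
    calc |f q.1| * |f q.2| * |W q| ≤ 1 * |W q| :=
          mul_le_mul_of_nonneg_right this (abs_nonneg _)
      _ = ‖W q‖ := by rw [one_mul, Real.norm_eq_abs]
  have hG : Integrable G (μ.prod μ) := hW.sub hffW
  set ε' := cutNorm μ G with hε'def
  have hε'0 : 0 ≤ ε' := cutNorm_nonneg hG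
  -- indicator multipliers
  have hgmeas : ∀ k : ℕ, Measurable (Set.indicator P (fun x => (2 * f x) ^ k)) := fun k =>
    ((measurable_const.mul hf).pow_const k).indicator hP
  have hhmeas : ∀ k : ℕ, Measurable (Set.indicator Q (fun x => f x ^ k)) := fun k =>
    (hf.pow_const k).indicator hQ
  -- key term bound
  have hterm : ∀ k : ℕ,
      |∫ p : S × S, Set.indicator P (fun x => f x ^ k) p.1 *
        Set.indicator Q (fun x => f x ^ k) p.2 * G p ∂(μ.prod μ)| ≤ (1/2 : ℝ) ^ k * ε' := by
    intro k
    have hptwise : ∀ p : S × S,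
        Set.indicator P (fun x => f x ^ k) p.1 * Set.indicator Q (fun x => f x ^ k) p.2 * G p
        = (1/2 : ℝ) ^ k * (Set.indicator P (fun x => (2 * f x) ^ k) p.1 *
            Set.indicator Q (fun x => f x ^ k) p.2 * G p) := by
      intro p
      by_cases h1 : p.1 ∈ P
      · simp only [Set.indicator_of_mem h1]
        have h2k : ((1:ℝ)/2) ^ k * 2 ^ k = 1 := by
          rw [← mul_pow]; norm_num
        linear_combination (-(f p.1 ^ k * Set.indicator Q (fun x => f x ^ k) p.2 * G p)) * h2k
      · simp [Set.indicator_of_notMem h1]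
    calc |∫ p : S × S, Set.indicator P (fun x => f x ^ k) p.1 *
            Set.indicator Q (fun x => f x ^ k) p.2 * G p ∂(μ.prod μ)|
        = |(1/2 : ℝ) ^ k * ∫ p : S × S, Set.indicator P (fun x => (2 * f x) ^ k) p.1 *
            Set.indicator Q (fun x => f x ^ k) p.2 * G p ∂(μ.prod μ)| := by
          rw [← integral_const_mul]
          congr 1
          exact integral_congr_ae (Eventually.of_forall hptwise)
      _ ≤ (1/2 : ℝ) ^ k * ε' := by
          rw [abs_mul, abs_pow]
          have : |(1/2 : ℝ)| = 1/2 := by norm_num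
          rw [this]
          refine mul_le_mul_of_nonneg_left ?_ (by positivity)
          refine abs_integral_mul_mul_le_cutNorm hG (hgmeas k) (hhmeas k) ?_ ?_
          · intro x
            by_cases hx : x ∈ P
            · simp only [Set.indicator_of_mem hx]
              have hfx0 := (hf01 x).1
              have hfx2 := hsmall x hx
              exact ⟨pow_nonneg (by linarith) k, pow_le_one₀ (by linarith) (by linarith)⟩
            · simp [Set.indicator_of_notMem hx]
          · intro x
            by_cases hx : x ∈ Q
            · simp only [Set.indicator_of_mem hx]
              exact ⟨pow_nonneg (hf01 x).1 k, pow_le_one₀ (hf01 x).1 (hf01 x).2⟩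
            · simp [Set.indicator_of_notMem hx]
  -- integrability of terms and remainder
  have hPind : ∀ k : ℕ, Measurable fun p : S × S => Set.indicator P (fun x => f x ^ k) p.1 :=
    fun k => ((hf.pow_const k).indicator hP).comp measurable_fst
  have hQind : ∀ k : ℕ, Measurable fun p : S × S => Set.indicator Q (fun x => f x ^ k) p.2 :=
    fun k => ((hf.pow_const k).indicator hQ).comp measurable_snd
  have hind01 : ∀ (R : Set S) (x : S) (k : ℕ),
      0 ≤ Set.indicator R (fun x => f x ^ k) x ∧ Set.indicator R (fun x => f x ^ k) x ≤ 1 := by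
    intro R x k
    by_cases hx : x ∈ R
    · simp only [Set.indicator_of_mem hx]
      exact ⟨pow_nonneg (hf01 x).1 k, pow_le_one₀ (hf01 x).1 (hf01 x).2⟩
    · simp [Set.indicator_of_notMem hx]
  have hprodbound : ∀ (F : S × S → ℝ) (k : ℕ) (p : S × S),
      ‖Set.indicator P (fun x => f x ^ k) p.1 * Set.indicator Q (fun x => f x ^ k) p.2 * F p‖
        ≤ ‖F p‖ := by
    intro F k p
    rw [Real.norm_eq_abs, Real.norm_eq_abs, abs_mul, abs_mul]
    have h1 := hind01 P p.1 k
    have h2 := hind01 Q p.2 k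
    rw [abs_of_nonneg h1.1, abs_of_nonneg h2.1]
    calc Set.indicator P (fun x => f x ^ k) p.1 * Set.indicator Q (fun x => f x ^ k) p.2 * |F p|
        ≤ 1 * 1 * |F p| := by
          apply mul_le_mul (mul_le_mul h1.2 h2.2 h2.1 zero_le_one) le_rfl (abs_nonneg _)
          norm_num
      _ = |F p| := by ring
  have htk_int : ∀ k : ℕ, Integrable (fun p : S × S =>
      Set.indicator P (fun x => f x ^ k) p.1 * Set.indicator Q (fun x => f x ^ k) p.2 * G p)
      (μ.prod μ) := fun k =>
    Integrable.mono' hG.norm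
      ((((hPind k).mul (hQind k)).aestronglyMeasurable).mul hG.1)
      (Eventually.of_forall fun p => hprodbound G k p)
  have hrem_int : ∀ N : ℕ, Integrable (fun p : S × S =>
      Set.indicator P (fun x => f x ^ N) p.1 * Set.indicator Q (fun x => f x ^ N) p.2 * W p)
      (μ.prod μ) := fun N =>
    Integrable.mono' hW.norm
      ((((hPind N).mul (hQind N)).aestronglyMeasurable).mul hW.1)
      (Eventually.of_forall fun p => hprodbound W N p)
  -- pointwise decomposition
  have hdecomp : ∀ (N : ℕ) (p : S × S), Set.indicator (P ×ˢ Q) W p =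
      (∑ k ∈ Finset.range N, Set.indicator P (fun x => f x ^ k) p.1 *
        Set.indicator Q (fun x => f x ^ k) p.2 * G p) +
      Set.indicator P (fun x => f x ^ N) p.1 * Set.indicator Q (fun x => f x ^ N) p.2 * W p := by
    intro N p
    by_cases h1 : p.1 ∈ P
    · by_cases h2 : p.2 ∈ Q
      · have hmem : p ∈ P ×ˢ Q := ⟨h1, h2⟩
        simp only [Set.indicator_of_mem hmem, Set.indicator_of_mem h1, Set.indicator_of_mem h2,
          hGdef]
        have hgs : (∑ k ∈ Finset.range N, (f p.1 * f p.2) ^ k) * (f p.1 * f p.2 - 1)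
            = (f p.1 * f p.2) ^ N - 1 := geom_sum_mul _ N
        have hmp : ∀ k : ℕ, f p.1 ^ k * f p.2 ^ k * (W p - f p.1 * f p.2 * W p)
            = (f p.1 * f p.2) ^ k * (W p - f p.1 * f p.2 * W p) := by
          intro k; rw [mul_pow]
        simp_rw [hmp, ← Finset.sum_mul]
        have hN : f p.1 ^ N * f p.2 ^ N = (f p.1 * f p.2) ^ N := (mul_pow _ _ _).symm
        linear_combination (W p) * hgs - W p * hN
      · have hmem : p ∉ P ×ˢ Q := fun hp => h2 hp.2
        simp [Set.indicator_of_notMem hmem, Set.indicator_of_notMem h2]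
    · have hmem : p ∉ P ×ˢ Q := fun hp => h1 hp.1
      simp [Set.indicator_of_notMem hmem, Set.indicator_of_notMem h1]
  -- the remainder bound
  set C := ∫ p, ‖W p‖ ∂(μ.prod μ) with hCdef
  have hremb : ∀ N : ℕ, |∫ p : S × S, Set.indicator P (fun x => f x ^ N) p.1 *
      Set.indicator Q (fun x => f x ^ N) p.2 * W p ∂(μ.prod μ)| ≤ (1/2 : ℝ) ^ N * C := by
    intro N
    have hpt : ∀ p : S × S, ‖Set.indicator P (fun x => f x ^ N) p.1 *
        Set.indicator Q (fun x => f x ^ N) p.2 * W p‖ ≤ (1/2 : ℝ) ^ N * ‖W p‖ := by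
      intro p
      rw [Real.norm_eq_abs, Real.norm_eq_abs, abs_mul, abs_mul]
      have h1 := hind01 P p.1 N
      have h2 := hind01 Q p.2 N
      rw [abs_of_nonneg h1.1, abs_of_nonneg h2.1]
      have hPN : Set.indicator P (fun x => f x ^ N) p.1 ≤ (1/2 : ℝ) ^ N := by
        by_cases hx : p.1 ∈ P
        · simp only [Set.indicator_of_mem hx]
          exact pow_le_pow_left₀ (hf01 p.1).1 (hsmall p.1 hx) N
        · simp only [Set.indicator_of_notMem hx]
          positivity
      calc Set.indicator P (fun x => f x ^ N) p.1 * Set.indicator Q (fun x => f x ^ N) p.2 * |W p|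
          ≤ (1/2 : ℝ) ^ N * 1 * |W p| := by
            apply mul_le_mul (mul_le_mul hPN h2.2 h2.1 (by positivity)) le_rfl (abs_nonneg _)
            positivity
        _ = (1/2 : ℝ) ^ N * |W p| := by ring
    calc |∫ p : S × S, Set.indicator P (fun x => f x ^ N) p.1 *
            Set.indicator Q (fun x => f x ^ N) p.2 * W p ∂(μ.prod μ)|
        ≤ ∫ p : S × S, ‖Set.indicator P (fun x => f x ^ N) p.1 *
            Set.indicator Q (fun x => f x ^ N) p.2 * W p‖ ∂(μ.prod μ) := by
          simpa [Real.norm_eq_abs] using norm_integral_le_integral_norm (μ := μ.prod μ)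
            (fun p : S × S => Set.indicator P (fun x => f x ^ N) p.1 *
              Set.indicator Q (fun x => f x ^ N) p.2 * W p)
      _ ≤ ∫ p : S × S, (1/2 : ℝ) ^ N * ‖W p‖ ∂(μ.prod μ) :=
          integral_mono (hrem_int N).norm (hW.norm.const_mul _) hpt
      _ = (1/2 : ℝ) ^ N * C := integral_const_mul _ _
  -- combining, for each N
  have hmain : ∀ N : ℕ, |∫ p in P ×ˢ Q, W p ∂(μ.prod μ)| ≤ 2 * ε' + (1/2 : ℝ) ^ N * C := by
    intro N
    have heq : ∫ p in P ×ˢ Q, W p ∂(μ.prod μ)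
        = (∑ k ∈ Finset.range N, ∫ p : S × S, Set.indicator P (fun x => f x ^ k) p.1 *
            Set.indicator Q (fun x => f x ^ k) p.2 * G p ∂(μ.prod μ)) +
          ∫ p : S × S, Set.indicator P (fun x => f x ^ N) p.1 *
            Set.indicator Q (fun x => f x ^ N) p.2 * W p ∂(μ.prod μ) := by
      rw [← integral_indicator (hP.prod hQ)]
      rw [integral_congr_ae (Eventually.of_forall (hdecomp N))]
      rw [integral_add (integrable_finset_sum _ fun k _ => htk_int k) (hrem_int N)]
      rw [integral_finset_sum _ fun k _ => htk_int k]
    rw [heq]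
    calc |(∑ k ∈ Finset.range N, ∫ p : S × S, Set.indicator P (fun x => f x ^ k) p.1 *
            Set.indicator Q (fun x => f x ^ k) p.2 * G p ∂(μ.prod μ)) +
          ∫ p : S × S, Set.indicator P (fun x => f x ^ N) p.1 *
            Set.indicator Q (fun x => f x ^ N) p.2 * W p ∂(μ.prod μ)|
        ≤ (∑ k ∈ Finset.range N, |∫ p : S × S, Set.indicator P (fun x => f x ^ k) p.1 *
            Set.indicator Q (fun x => f x ^ k) p.2 * G p ∂(μ.prod μ)|) +
          |∫ p : S × S, Set.indicator P (fun x => f x ^ N) p.1 *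
            Set.indicator Q (fun x => f x ^ N) p.2 * W p ∂(μ.prod μ)| :=
          le_trans (abs_add_le _ _) (by gcongr; exact Finset.abs_sum_le_sum_abs _ _)
      _ ≤ (∑ k ∈ Finset.range N, (1/2 : ℝ) ^ k * ε') + (1/2 : ℝ) ^ N * C := by
          gcongr with k hk
          exacts [hterm k, hremb N]
      _ ≤ 2 * ε' + (1/2 : ℝ) ^ N * C := by
          have hsum : (∑ k ∈ Finset.range N, (1/2 : ℝ) ^ k * ε') ≤ 2 * ε' := by
            rw [← Finset.sum_mul]
            exact mul_le_mul_of_nonneg_right (sum_geometric_two_le N) hε'0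
          linarith
  -- take the limit N → ∞
  have htend : Tendsto (fun N : ℕ => 2 * ε' + (1/2 : ℝ) ^ N * C) atTop (𝓝 (2 * ε' + 0 * C)) :=
    (((tendsto_pow_atTop_nhds_zero_of_lt_one (by norm_num) (by norm_num)).mul_const C).const_add
      (2 * ε'))
  have hfin := ge_of_tendsto' htend hmain
  simpa using hfin

end Helpers

theorem cut_regular_tail_of_f {S : Type*} [MeasurableSpace S]
    (μ : Measure S) [SigmaFinite μ]
    (W : S × S → ℝ) (hW : Integrable W (μ.prod μ))
    (hsymm : ∀ x y, W (x, y) = W (y, x))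
    (f : S → ℝ) (hf : Measurable f) (hf01 : ∀ x, f x ∈ Set.Icc (0:ℝ) 1)
    (hfint : Integrable f μ)
    (M ε : ℝ) (hε : 0 < ε) (hfM : ∫ x, f x ∂μ ≤ M)
    (hcut : cutNorm μ (fun q => W q - f q.1 * f q.2 * W q) < ε) :
    μ {x | 1/2 < f x} ≤ ENNReal.ofReal (2 * M) ∧
      cutNorm μ (fun q => W q -
        Set.indicator ({x | 1/2 < f x} ×ˢ {x | 1/2 < f x}) W q) < 4 * ε := by
  have hU : MeasurableSet {x : S | 1/2 < f x} := measurableSet_lt measurable_const hf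
  constructor
  · -- Markov inequality part
    have hlin : ∫⁻ x, ENNReal.ofReal (f x) ∂μ = ENNReal.ofReal (∫ x, f x ∂μ) :=
      (ofReal_integral_eq_lintegral_ofReal hfint
        (Eventually.of_forall fun x => (hf01 x).1)).symm
    have hsub : {x : S | 1/2 < f x} ⊆ {x | ENNReal.ofReal (1/2) ≤ ENNReal.ofReal (f x)} :=
      fun x hx => ENNReal.ofReal_le_ofReal (le_of_lt hx)
    calc μ {x | 1/2 < f x}
        ≤ μ {x | ENNReal.ofReal (1/2) ≤ ENNReal.ofReal (f x)} := measure_mono hsub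
      _ ≤ (∫⁻ x, ENNReal.ofReal (f x) ∂μ) / ENNReal.ofReal (1/2) :=
          meas_ge_le_lintegral_div (ENNReal.measurable_ofReal.comp hf).aemeasurable
            (by simp) ENNReal.ofReal_ne_top
      _ = ENNReal.ofReal (∫ x, f x ∂μ) / ENNReal.ofReal (1/2) := by rw [hlin]
      _ ≤ ENNReal.ofReal (2 * M) := by
          have hM0 : (0:ℝ) ≤ M := le_trans (integral_nonneg fun x => (hf01 x).1) hfM
          rw [ENNReal.div_le_iff_le_mul (Or.inl (by simp)) (Or.inl ENNReal.ofReal_ne_top)]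
          rw [← ENNReal.ofReal_mul (by linarith : (0:ℝ) ≤ 2 * M)]
          apply ENNReal.ofReal_le_ofReal
          linarith
  · -- cut norm part
    set U := {x : S | 1/2 < f x} with hUdef
    set ε' := cutNorm μ (fun q => W q - f q.1 * f q.2 * W q) with hε'def
    have hε'0 : 0 ≤ ε' := by
      have hffW : Integrable (fun q : S × S => f q.1 * f q.2 * W q) (μ.prod μ) := by
        refine Integrable.mono' hW.norm
          ((((hf.comp measurable_fst).mul (hf.comp measurable_snd)).aestronglyMeasurable).mul
            hW.1) (Eventually.of_forall fun q => ?_)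
        rw [Real.norm_eq_abs, abs_mul, abs_mul]
        have h1 := hf01 q.1; have h2 := hf01 q.2
        have hle : |f q.1| * |f q.2| ≤ 1 := by
          rw [abs_of_nonneg h1.1, abs_of_nonneg h2.1]
          exact mul_le_one₀ h1.2 h2.1 h2.2
        calc |f q.1| * |f q.2| * |W q| ≤ 1 * |W q| :=
              mul_le_mul_of_nonneg_right hle (abs_nonneg _)
          _ = ‖W q‖ := by rw [one_mul, Real.norm_eq_abs]
      exact cutNorm_nonneg (hW.sub hffW)
    have hswap : ∀ (A B : Set S), MeasurableSet A → MeasurableSet B →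
        ∫ p in A ×ˢ B, W p ∂(μ.prod μ) = ∫ p in B ×ˢ A, W p ∂(μ.prod μ) := by
      intro A B hA hB
      rw [← integral_indicator (hA.prod hB), ← integral_indicator (hB.prod hA)]
      rw [← integral_prod_swap (fun z : S × S => Set.indicator (B ×ˢ A) W z)]
      refine integral_congr_ae (Eventually.of_forall fun z => ?_)
      obtain ⟨x, y⟩ := z
      by_cases hx : x ∈ A <;> by_cases hy : y ∈ B <;>
        simp [Set.indicator_apply, Set.mem_prod, hx, hy, hsymm x y]
    have hbound : cutNorm μ (fun q => W q - Set.indicator (U ×ˢ U) W q) ≤ 4 * ε' := by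
      apply cutNorm_le
      intro T V hT hV
      have hdec : ∀ p : S × S,
          Set.indicator (T ×ˢ V) (fun q => W q - Set.indicator (U ×ˢ U) W q) p
          = Set.indicator ((T ∩ Uᶜ) ×ˢ V) W p
            + Set.indicator ((T ∩ U) ×ˢ (V ∩ Uᶜ)) W p := by
        intro p
        by_cases h1 : p.1 ∈ T <;> by_cases h2 : p.2 ∈ V <;>
          by_cases h3 : p.1 ∈ U <;> by_cases h4 : p.2 ∈ U <;>
          simp [Set.indicator_apply, Set.mem_prod, h1, h2, h3, h4]
      have heq : ∫ p in T ×ˢ V, (W p - Set.indicator (U ×ˢ U) W p) ∂(μ.prod μ)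
          = (∫ p in (T ∩ Uᶜ) ×ˢ V, W p ∂(μ.prod μ))
            + ∫ p in (T ∩ U) ×ˢ (V ∩ Uᶜ), W p ∂(μ.prod μ) := by
        rw [← integral_indicator (hT.prod hV)]
        rw [integral_congr_ae (Eventually.of_forall hdec)]
        rw [integral_add (hW.indicator ((hT.inter hU.compl).prod hV))
          (hW.indicator ((hT.inter hU).prod (hV.inter hU.compl)))]
        rw [integral_indicator ((hT.inter hU.compl).prod hV),
          integral_indicator ((hT.inter hU).prod (hV.inter hU.compl))]
      have hA : |∫ p in (T ∩ Uᶜ) ×ˢ V, W p ∂(μ.prod μ)| ≤ 2 * ε' :=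
        key_lemma hW hf hf01 (hT.inter hU.compl) hV
          (fun x hx => le_of_not_gt hx.2)
      have hBeq : ∫ p in (T ∩ U) ×ˢ (V ∩ Uᶜ), W p ∂(μ.prod μ)
          = ∫ p in (V ∩ Uᶜ) ×ˢ (T ∩ U), W p ∂(μ.prod μ) :=
        hswap _ _ (hT.inter hU) (hV.inter hU.compl)
      have hB : |∫ p in (T ∩ U) ×ˢ (V ∩ Uᶜ), W p ∂(μ.prod μ)| ≤ 2 * ε' := by
        rw [hBeq]
        exact key_lemma hW hf hf01 (hV.inter hU.compl) (hT.inter hU)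
          (fun x hx => le_of_not_gt hx.2)
      calc |∫ p in T ×ˢ V, (W p - Set.indicator (U ×ˢ U) W p) ∂(μ.prod μ)|
          = |(∫ p in (T ∩ Uᶜ) ×ˢ V, W p ∂(μ.prod μ))
              + ∫ p in (T ∩ U) ×ˢ (V ∩ Uᶜ), W p ∂(μ.prod μ)| := by rw [heq]
        _ ≤ |∫ p in (T ∩ Uᶜ) ×ˢ V, W p ∂(μ.prod μ)|
              + |∫ p in (T ∩ U) ×ˢ (V ∩ Uᶜ), W p ∂(μ.prod μ)| := abs_add_le _ _
        _ ≤ 4 * ε' := by linarith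
    calc cutNorm μ (fun q => W q - Set.indicator (U ×ˢ U) W q) ≤ 4 * ε' := hbound
      _ < 4 * ε := by linarith
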